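/- Let G be a locally finite graph, let {f_n} be a non-decreasing sequence of non-negative integers, let r be a positive integer, and define g_{n+1} = Σ_{i=1}^{r} f_{rn+i} for n ≥ 0. Then G has the ({f_n}, 1)-containment property if and only if G has the ({g_n}, r)-containment property. -/

import Mathlib

open SimpleGraph

namespace Firefighter

variable {V : Type*}

/-- The set of vertices on fire at time `n`, starting from initial fire `X0`, with fire spreading
along paths of length at most `r` avoiding the protected sets `W 1, ..., W n`. -/
def fireSet (G : SimpleGraph V) (r : ℕ) (X0 : Set V) (W : ℕ → Set V) : ℕ → Set V
  | 0 => X0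
  | n + 1 => {v | ∃ u ∈ fireSet G r X0 W n, ∃ p : G.Walk u v, p.length ≤ r ∧
      ∀ w ∈ p.support, ∀ i, 1 ≤ i → i ≤ n + 1 → w ∉ W i}

/-- `W` is an `(f, r)`-containment strategy for the initial fire `X0` in `G`. -/
def IsContainmentStrategy (G : SimpleGraph V) (r : ℕ) (f : ℕ → ℕ)
    (X0 : Set V) (W : ℕ → Set V) : Prop :=
  (∀ n, 1 ≤ n → (W n).Finite ∧ (W n).ncard ≤ f n) ∧
  (∀ n, Disjoint (fireSet G r X0 W n) (W (n + 1))) ∧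
  (∃ N, 0 < N ∧ ∀ n, N ≤ n → fireSet G r X0 W n = fireSet G r X0 W N)

/-- `G` has the `(f, r)`-containment property. -/
def HasContainmentProperty (G : SimpleGraph V) (r : ℕ) (f : ℕ → ℕ) : Prop :=
  ∀ X0 : Set V, X0.Finite → ∃ W : ℕ → Set V, IsContainmentStrategy G r f X0 W

/-- A graph is locally finite if every vertex has finitely many neighbors. -/
def LocallyFiniteGraph (G : SimpleGraph V) : Prop := ∀ v, (G.neighborSet v).Finite

/-- The ball of radius `n` about the vertex `g0` (in the combinatorial metric). -/
def ball (G : SimpleGraph V) (g0 : V) (n : ℕ) : Set V :=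
  {v | G.Reachable g0 v ∧ G.dist g0 v ≤ n}

/-- The sphere of radius `n` about the vertex `g0` (in the combinatorial metric). -/
def sphere (G : SimpleGraph V) (g0 : V) (n : ℕ) : Set V :=
  {v | G.Reachable g0 v ∧ G.dist g0 v = n}

/-- For `T` a subset of the sphere of radius `n`, `nextAdj G g0 n T` is the set `T*` of vertices
of the sphere of radius `n+1` adjacent to at least one vertex of `T`. -/
def nextAdj (G : SimpleGraph V) (g0 : V) (n : ℕ) (T : Set V) : Set V :=
  {v ∈ sphere G g0 (n + 1) | ∃ u ∈ T, G.Adj u v}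

/-- A graph has bounded degree if there is a uniform finite bound on vertex degrees. -/
def BoundedDegree (G : SimpleGraph V) : Prop :=
  ∃ D : ℕ, ∀ v, (G.neighborSet v).Finite ∧ (G.neighborSet v).ncard ≤ D

/-- Two graphs are quasi-isometric. -/
def QuasiIsometric {V' : Type*} (G : SimpleGraph V) (H : SimpleGraph V') : Prop :=
  ∃ c : ℕ, 1 ≤ c ∧ ∃ (φ : V → V') (ψ : V' → V),
    (∀ g1 g2, H.dist (φ g1) (φ g2) ≤ c * G.dist g1 g2 + c) ∧
    (∀ h1 h2, G.dist (ψ h1) (ψ h2) ≤ c * H.dist h1 h2 + c) ∧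
    (∀ g, G.dist g (ψ (φ g)) ≤ c) ∧
    (∀ h, H.dist h (φ (ψ h)) ≤ c)

/-- `f ≼ g` : there is `c > 0` with `f n ≤ c * g (c*n + c) + c` for all `n ≥ c`. -/
def Preceq (f g : ℕ → ℕ) : Prop :=
  ∃ c : ℕ, 0 < c ∧ ∀ n, c ≤ n → f n ≤ c * g (c * n + c) + c

/-- `f` and `g` have equivalent asymptotic growth. -/
def AsympEquiv (f g : ℕ → ℕ) : Prop := Preceq f g ∧ Preceq g f

/-- The ball of radius `n` about a set `X` of vertices. -/
def ballSet (G : SimpleGraph V) (X : Set V) (n : ℕ) : Set V :=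
  {v | ∃ u ∈ X, ∃ p : G.Walk u v, p.length ≤ n}

section Aux

variable {G : SimpleGraph V} {r : ℕ} {X0 : Set V} {W : ℕ → Set V}

lemma fireSet_zero : fireSet G r X0 W 0 = X0 := by rw [fireSet]

lemma mem_fireSet_succ {v : V} {n : ℕ} :
    v ∈ fireSet G r X0 W (n+1) ↔ ∃ u ∈ fireSet G r X0 W n, ∃ p : G.Walk u v,
      p.length ≤ r ∧ ∀ w ∈ p.support, ∀ i, 1 ≤ i → i ≤ n + 1 → w ∉ W i := by
  rw [fireSet]; rfl

lemma not_mem_W_of_le {v : V} {s j : ℕ} (hv : v ∈ fireSet G r X0 W s)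
    (h1 : 1 ≤ j) (hj : j ≤ s) : v ∉ W j := by
  cases s with
  | zero => omega
  | succ n =>
    obtain ⟨u, hu, p, hlen, hsup⟩ := mem_fireSet_succ.mp hv
    exact hsup v p.end_mem_support j h1 hj

lemma fireSet_subset_succ {n : ℕ}
    (hd : Disjoint (fireSet G r X0 W n) (W (n+1))) :
    fireSet G r X0 W n ⊆ fireSet G r X0 W (n+1) := by
  intro v hv
  refine mem_fireSet_succ.mpr ⟨v, hv, Walk.nil, by simp, ?_⟩
  intro w hw j h1 hj
  simp only [Walk.support_nil, List.mem_singleton] at hw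
  subst hw
  rcases eq_or_lt_of_le hj with h | h
  · subst h; exact Set.disjoint_left.mp hd hv
  · exact not_mem_W_of_le hv h1 (by omega)

lemma fireSet_mono {m n : ℕ} (hmn : m ≤ n)
    (hd : ∀ t, t < n → Disjoint (fireSet G r X0 W t) (W (t+1))) :
    fireSet G r X0 W m ⊆ fireSet G r X0 W n := by
  induction n with
  | zero => exact Nat.le_zero.mp hmn ▸ subset_rfl
  | succ n ih =>
    rcases eq_or_lt_of_le hmn with h | h
    · exact h ▸ subset_rfl
    · exact (ih (by omega) (fun t ht => hd t (by omega))).trans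
        (fireSet_subset_succ (hd n (by omega)))

lemma not_mem_W {v : V} {s j : ℕ} (hv : v ∈ fireSet G r X0 W s) (h1 : 1 ≤ j)
    (hd : ∀ t, t < j → Disjoint (fireSet G r X0 W t) (W (t+1))) : v ∉ W j := by
  rcases le_or_gt j s with h | h
  · exact not_mem_W_of_le hv h1 h
  · have hv' : v ∈ fireSet G r X0 W (j-1) :=
      fireSet_mono (by omega) (fun t ht => hd t (by omega)) hv
    have := Set.disjoint_left.mp (hd (j-1) (by omega)) hv'
    rwa [show j - 1 + 1 = j by omega] at this

lemma walk_length_le_one {u v : V} (p : G.Walk u v) (h : p.length ≤ 1) :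
    u = v ∨ G.Adj u v := by
  cases p with
  | nil => exact Or.inl rfl
  | @cons _ x _ h' q =>
    have hq : q.length = 0 := by simp only [Walk.length_cons] at h; omega
    have hxv := Walk.eq_of_length_eq_zero hq
    subst hxv
    exact Or.inr h'

lemma exists_walk_of_mem_fireSet_one {m : ℕ} : ∀ {s : ℕ} {v : V},
    v ∈ fireSet G 1 X0 W (m + s) →
    ∃ u ∈ fireSet G 1 X0 W m, ∃ p : G.Walk u v, p.length ≤ s ∧
      ∀ w ∈ p.support, ∃ t, t ≤ m + s ∧ w ∈ fireSet G 1 X0 W t := by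
  intro s
  induction s with
  | zero =>
    intro v hv
    exact ⟨v, hv, Walk.nil, by simp, fun w hw => by
      simp only [Walk.support_nil, List.mem_singleton] at hw
      exact ⟨m, le_rfl, hw ▸ hv⟩⟩
  | succ s ih =>
    intro v hv
    have hvcopy := hv
    obtain ⟨u', hu', q, hq, _⟩ := mem_fireSet_succ.mp hv
    rcases walk_length_le_one q hq with h | h
    · subst h
      obtain ⟨u, hu, p, hp, hs⟩ := ih hu'
      exact ⟨u, hu, p, hp.trans (by omega), fun w hw =>
        (hs w hw).imp fun t ht => ⟨ht.1.trans (by omega), ht.2⟩⟩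
    · obtain ⟨u, hu, p, hp, hs⟩ := ih hu'
      refine ⟨u, hu, p.concat h, ?_, ?_⟩
      · rw [Walk.length_concat]; omega
      · intro w hw
        rw [Walk.support_concat] at hw
        rcases List.mem_append.mp hw with hw | hw
        · exact (hs w hw).imp fun t ht => ⟨ht.1.trans (by omega), ht.2⟩
        · simp only [List.mem_singleton] at hw
          exact ⟨m + (s+1), le_rfl, hw ▸ hvcopy⟩

lemma mem_fireSet_one_succ {u v : V} {m : ℕ} (hu : u ∈ fireSet G 1 X0 W m)
    (hadj : u = v ∨ G.Adj u v)
    (hW : ∀ j, 1 ≤ j → j ≤ m + 1 → u ∉ W j ∧ v ∉ W j) :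
    v ∈ fireSet G 1 X0 W (m+1) := by
  rcases hadj with rfl | hadj
  · refine mem_fireSet_succ.mpr ⟨u, hu, Walk.nil, by simp, ?_⟩
    intro w hw j h1 hj
    simp only [Walk.support_nil, List.mem_singleton] at hw
    subst hw; exact (hW j h1 hj).1
  · refine mem_fireSet_succ.mpr ⟨u, hu, Walk.cons hadj Walk.nil, by simp, ?_⟩
    intro w hw j h1 hj
    simp only [Walk.support_cons, Walk.support_nil, List.mem_cons,
      List.mem_singleton, List.not_mem_nil, or_false] at hw
    rcases hw with rfl | rfl
    · exact (hW j h1 hj).1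
    · exact (hW j h1 hj).2

lemma mem_fireSet_one_of_walk {u v : V} (p : G.Walk u v) : ∀ {m : ℕ},
    u ∈ fireSet G 1 X0 W m →
    (∀ w ∈ p.support, ∀ j, 1 ≤ j → j ≤ m + p.length → w ∉ W j) →
    v ∈ fireSet G 1 X0 W (m + p.length) := by
  induction p with
  | nil => intro m hu _; exact hu
  | @cons a b c h q ih =>
    intro m hu hsup
    have hlen : (Walk.cons h q).length = q.length + 1 := Walk.length_cons _ _
    have hb : b ∈ fireSet G 1 X0 W (m+1) := by
      refine mem_fireSet_one_succ hu (Or.inr h) (fun j h1 hj => ⟨?_, ?_⟩)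
      · exact hsup a (by simp) j h1 (by rw [hlen]; omega)
      · exact hsup b (by simp [Walk.support_cons, q.start_mem_support]) j h1 (by rw [hlen]; omega)
    have hsup' : ∀ w ∈ q.support, ∀ j, 1 ≤ j → j ≤ m + 1 + q.length → w ∉ W j := by
      intro w hw j h1 hj
      refine hsup w ?_ j h1 (by rw [hlen]; omega)
      rw [Walk.support_cons]
      exact List.mem_cons_of_mem _ hw
    have := ih hb hsup'
    rwa [show m + 1 + q.length = m + (Walk.cons h q).length by rw [hlen]; omega] at this

lemma ballSet_finite (hlf : LocallyFiniteGraph G) {X : Set V} (hX : X.Finite) :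
    ∀ n, (ballSet G X n).Finite := by
  intro n
  induction n generalizing X with
  | zero =>
    refine hX.subset ?_
    rintro v ⟨u, hu, p, hp⟩
    have := Walk.eq_of_length_eq_zero (Nat.le_zero.mp hp)
    exact this ▸ hu
  | succ n ih =>
    have hX' : (X ∪ ⋃ u ∈ X, G.neighborSet u).Finite :=
      hX.union (hX.biUnion (fun u _ => hlf u))
    refine (ih hX').subset ?_
    rintro v ⟨u, hu, p, hp⟩
    cases p with
    | nil => exact ⟨v, Or.inl hu, Walk.nil, by simp⟩
    | @cons _ x _ hadj q =>
      refine ⟨x, Or.inr ?_, q, ?_⟩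
      · exact Set.mem_biUnion hu hadj
      · simp only [Walk.length_cons] at hp; omega

lemma fireSet_finite (hlf : LocallyFiniteGraph G) (hX0 : X0.Finite) :
    ∀ n, (fireSet G r X0 W n).Finite := by
  intro n
  induction n with
  | zero => exact hX0
  | succ n ih =>
    refine (ballSet_finite hlf ih r).subset ?_
    intro v hv
    obtain ⟨u, hu, p, hp, _⟩ := mem_fireSet_succ.mp hv
    exact ⟨u, hu, p, hp⟩

lemma stabilize {A : ℕ → Set V} {S : Set V} (hS : S.Finite)
    (hsub : ∀ n, A n ⊆ S) (hmono : ∀ n, A n ⊆ A (n+1)) :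
    ∃ N, 0 < N ∧ ∀ n, N ≤ n → A n = A N := by
  have hfin : ∀ n, (A n).Finite := fun n => hS.subset (hsub n)
  have hmle : ∀ m n, m ≤ n → A m ⊆ A n := by
    intro m n h
    induction n with
    | zero => exact Nat.le_zero.mp h ▸ subset_rfl
    | succ n ih =>
      rcases eq_or_lt_of_le h with h' | h'
      · exact h' ▸ subset_rfl
      · exact (ih (by omega)).trans (hmono n)
  set c : ℕ → ℕ := fun n => (A n).ncard with hc
  have hbdd : BddAbove (Set.range c) := by
    refine ⟨S.ncard, ?_⟩
    rintro x ⟨n, rfl⟩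
    exact Set.ncard_le_ncard (hsub n) hS
  obtain ⟨N, hN⟩ := Nat.sSup_mem (Set.range_nonempty c) hbdd
  refine ⟨N+1, Nat.succ_pos _, fun n hn => ?_⟩
  have h1 : A (N+1) ⊆ A n := hmle _ _ hn
  have h2 : c n ≤ c N := hN ▸ le_csSup hbdd ⟨n, rfl⟩
  have h3 : c N ≤ c (N+1) := Set.ncard_le_ncard (hmle N (N+1) (by omega)) (hfin _)
  exact (Set.eq_of_subset_of_ncard_le h1 (h2.trans h3) (hfin n)).symm

lemma ncard_biUnion_le (S : ℕ → Set V) (hfin : ∀ i, (S i).Finite) (k : ℕ) :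
    (⋃ i ∈ Finset.range k, S i).Finite ∧
    (⋃ i ∈ Finset.range k, S i).ncard ≤ ∑ i ∈ Finset.range k, (S i).ncard := by
  induction k with
  | zero => simp
  | succ k ih =>
    have he : (⋃ i ∈ Finset.range (k+1), S i) = S k ∪ ⋃ i ∈ Finset.range k, S i := by
      rw [Finset.range_add_one]
      simp [Set.biUnion_insert]
    constructor
    · rw [he]; exact (hfin k).union ih.1
    · rw [he, Finset.sum_range_succ]
      have h1 : (S k ∪ ⋃ i ∈ Finset.range k, S i).ncard
          ≤ (S k).ncard + (⋃ i ∈ Finset.range k, S i).ncard := Set.ncard_union_le _ _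
      have h2 := ih.2
      omega

lemma split_two {S : Set V} (hS : S.Finite) {a b : ℕ} (h : S.ncard ≤ a + b) :
    ∃ A B : Set V, S = A ∪ B ∧ A.Finite ∧ A.ncard ≤ a ∧ B.Finite ∧ B.ncard ≤ b := by
  rcases le_or_gt S.ncard a with h' | h'
  · exact ⟨S, ∅, by simp, hS, h', Set.finite_empty, by simp⟩
  · obtain ⟨A, hAS, hA⟩ := Set.exists_subset_card_eq (le_of_lt h')
    refine ⟨A, S \ A, (Set.union_diff_cancel hAS).symm, hS.subset hAS, hA.le, hS.diff, ?_⟩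
    have hd := Set.ncard_diff hAS (hS.subset hAS)
    omega

lemma split_many (a : ℕ → ℕ) : ∀ (k : ℕ) (S : Set V), S.Finite →
    S.ncard ≤ ∑ i ∈ Finset.range k, a i →
    ∃ P : ℕ → Set V, (∀ i, (P i).Finite ∧ (P i).ncard ≤ a i) ∧
      S = ⋃ i ∈ Finset.range k, P i := by
  intro k
  induction k with
  | zero =>
    intro S hS hcard
    simp only [Finset.range_zero, Finset.sum_empty, Nat.le_zero] at hcard
    refine ⟨fun _ => ∅, fun i => ⟨Set.finite_empty, by simp⟩, ?_⟩
    rw [(Set.ncard_eq_zero hS).mp hcard]; simp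
  | succ k ih =>
    intro S hS hcard
    rw [Finset.sum_range_succ] at hcard
    obtain ⟨B, A, hSBA, hBfin, hBcard, hAfin, hAcard⟩ := split_two hS hcard
    obtain ⟨P, hP1, hP2⟩ := ih B hBfin hBcard
    refine ⟨fun i => if i = k then A else P i, fun i => ?_, ?_⟩
    · by_cases hik : i = k
      · simp only [hik, if_pos rfl]; exact ⟨hAfin, hik ▸ hAcard⟩
      · simp only [if_neg hik]; exact hP1 i
    · rw [Finset.range_add_one]
      rw [Finset.set_biUnion_insert]
      simp only [if_pos rfl]
      have : (⋃ i ∈ (Finset.range k : Finset ℕ), (if i = k then A else P i)) =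
          ⋃ i ∈ (Finset.range k : Finset ℕ), P i := by
        apply Set.iUnion₂_congr
        intro i hi
        rw [if_neg (by simp at hi; omega)]
      rw [this, hSBA, ← hP2, Set.union_comm]
      simp


lemma dir1 {G : SimpleGraph V} (hlf : LocallyFiniteGraph G)
    {f g : ℕ → ℕ} {r : ℕ} (hr : 1 ≤ r)
    (hg : ∀ n : ℕ, g (n + 1) = ∑ i ∈ Finset.range r, f (r * n + i + 1))
    (h1 : HasContainmentProperty G 1 f) : HasContainmentProperty G r g := by
  intro X0 hX0
  obtain ⟨W, hWsz, hWd, N1, hN1pos, hN1⟩ := h1 X0 hX0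
  have hrpos : 0 < r := hr
  set W' : ℕ → Set V := fun k => ⋃ i ∈ Finset.range r, W (r*(k-1) + i + 1) with hW'def
  have hW'succ : ∀ m, W' (m+1) = ⋃ i ∈ Finset.range r, W (r*m + i + 1) := by
    intro m; simp only [hW'def, Nat.add_sub_cancel]
  have harith : ∀ (n j : ℕ), 1 ≤ j → j ≤ r*(n+1) → ∃ i q, i ≤ n ∧ q < r ∧ j = r*i + q + 1 := by
    intro n j h1j hj
    refine ⟨(j-1)/r, (j-1)%r, ?_, Nat.mod_lt _ hrpos, ?_⟩
    · have hlt : (j-1)/r < n+1 :=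
        (Nat.div_lt_iff_lt_mul hrpos).mpr (by rw [mul_comm]; omega)
      exact Nat.lt_succ_iff.mp hlt
    · have hdm : r * ((j-1)/r) + (j-1)%r = j - 1 := by rw [Nat.div_add_mod]
      calc j = (j-1) + 1 := by omega
      _ = r * ((j-1)/r) + (j-1)%r + 1 := by rw [hdm]
  have key : ∀ n, fireSet G r X0 W' n ⊆ fireSet G 1 X0 W (r*n) := by
    intro n
    induction n with
    | zero => exact subset_rfl
    | succ n ih =>
      intro v hv
      obtain ⟨u, hu, p, hlen, hsup⟩ := mem_fireSet_succ.mp hv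
      have hu' := ih hu
      have hsup' : ∀ w ∈ p.support, ∀ j, 1 ≤ j → j ≤ r*n + p.length → w ∉ W j := by
        intro w hw j hj1 hj2
        have hjle : j ≤ r*(n+1) := by
          have hh : r*(n+1) = r*n + r := by ring
          omega
        obtain ⟨i, q, hi, hq, rfl⟩ := harith n j hj1 hjle
        have hWi := hsup w hw (i+1) (by omega) (by omega)
        rw [hW'succ i] at hWi
        intro hmem
        refine hWi ?_
        simp only [Set.mem_iUnion]
        exact ⟨q, Finset.mem_range.mpr hq, hmem⟩
      have hv' := mem_fireSet_one_of_walk p hu' hsup'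
      refine fireSet_mono (show r*n + p.length ≤ r*(n+1) by
        have hh : r*(n+1) = r*n + r := by ring
        omega) (fun t _ => hWd t) hv'
  have hsz : ∀ k, 1 ≤ k → (W' k).Finite ∧ (W' k).ncard ≤ g k := by
    intro k hk
    obtain ⟨m, rfl⟩ : ∃ m, k = m+1 := ⟨k-1, by omega⟩
    rw [hW'succ m]
    have hfin : ∀ i, (W (r*m + i + 1)).Finite := fun i => (hWsz _ (by omega)).1
    obtain ⟨hfinU, hcard⟩ := ncard_biUnion_le (fun i => W (r*m+i+1)) hfin r
    refine ⟨hfinU, hcard.trans ?_⟩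
    rw [hg m]
    exact Finset.sum_le_sum (fun i _ => (hWsz _ (by omega)).2)
  have hdisj : ∀ n, Disjoint (fireSet G r X0 W' n) (W' (n+1)) := by
    intro n
    rw [Set.disjoint_left]
    intro v hv hvW
    rw [hW'succ n] at hvW
    simp only [Set.mem_iUnion] at hvW
    obtain ⟨i, hi, hvW⟩ := hvW
    exact not_mem_W (key n hv) (by omega) (fun t _ => hWd t) hvW
  have hYfin : (fireSet G 1 X0 W N1).Finite := fireSet_finite hlf hX0 N1
  have hsubS : ∀ n, fireSet G r X0 W' n ⊆ fireSet G 1 X0 W N1 := by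
    intro n
    refine (key n).trans ?_
    rcases le_or_gt (r*n) N1 with h | h
    · exact fireSet_mono h (fun t _ => hWd t)
    · rw [hN1 (r*n) h.le]
  obtain ⟨N, hNpos, hNs⟩ := stabilize hYfin hsubS (fun n => fireSet_subset_succ (hdisj n))
  exact ⟨W', hsz, hdisj, N, hNpos, hNs⟩

lemma dir2 {G : SimpleGraph V} (hlf : LocallyFiniteGraph G)
    {f g : ℕ → ℕ} {r : ℕ} (hr : 1 ≤ r)
    (hg : ∀ n : ℕ, g (n + 1) = ∑ i ∈ Finset.range r, f (r * n + i + 1))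
    (h2 : HasContainmentProperty G r g) : HasContainmentProperty G 1 f := by
  intro X0 hX0
  have hrpos : 0 < r := hr
  set X1 : Set V := ballSet G X0 r with hX1def
  have hX1 : X1.Finite := ballSet_finite hlf hX0 r
  obtain ⟨W', hW'sz, hW'd, N, hNpos, hNs⟩ := h2 X1 hX1
  have hsplit : ∀ n, ∃ P : ℕ → Set V,
      (∀ i, (P i).Finite ∧ (P i).ncard ≤ f (r*n + i + 1)) ∧
      W' (n+1) = ⋃ i ∈ Finset.range r, P i := by
    intro n
    obtain ⟨hfin, hcard⟩ := hW'sz (n+1) (by omega)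
    exact split_many (fun i => f (r*n+i+1)) r _ hfin (hcard.trans (hg n).le)
  choose P hP1 hP2 using hsplit
  set W : ℕ → Set V := fun m => if m = 0 then ∅ else P ((m-1)/r) ((m-1)%r) with hWdef
  have hdm : ∀ t : ℕ, r * (t/r) + t%r = t := by
    intro t; rw [Nat.div_add_mod]
  have hWm : ∀ n i, i < r → W (r*n + i + 1) = P n i := by
    intro n i hi
    have e2 : (r*n + i)/r = n := by
      rw [Nat.mul_add_div hrpos, Nat.div_eq_of_lt hi]
      omega
    have e3 : (r*n + i)%r = i := by
      rw [Nat.mul_add_mod, Nat.mod_eq_of_lt hi]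
    simp only [hWdef]
    rw [if_neg (by omega)]
    have e1 : (r*n + i + 1) - 1 = r*n + i := rfl
    rw [e1, e2, e3]
  have hWt : ∀ t, W (t+1) = P (t/r) (t%r) := by
    intro t
    have h' := hWm (t/r) (t%r) (Nat.mod_lt _ hrpos)
    rwa [hdm t] at h'
  have inv : ∀ n, ∀ n', n' ≤ n → ∀ k, k ≤ r →
      fireSet G 1 X0 W (r*n' + k) ⊆ fireSet G r X1 W' n' := by
    intro n
    induction n with
    | zero =>
      intro n' hn' k hk
      obtain rfl : n' = 0 := Nat.le_zero.mp hn'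
      intro v hv
      have hv' : v ∈ fireSet G 1 X0 W (0 + k) := by
        rwa [show r*0+k = 0+k by simp] at hv
      obtain ⟨u, hu, p, hlen, _⟩ := exists_walk_of_mem_fireSet_one hv'
      rw [fireSet_zero, hX1def]
      exact ⟨u, hu, p, hlen.trans hk⟩
    | succ n ihn =>
      intro n' hn' k hk
      rcases eq_or_lt_of_le hn' with rfl | hlt
      swap
      · exact ihn n' (by omega) k hk
      have hD : ∀ t, t < r*(n+1) → Disjoint (fireSet G 1 X0 W t) (W (t+1)) := by
        intro t ht
        have htn : t/r ≤ n := by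
          have hh := (Nat.div_lt_iff_lt_mul hrpos).mpr
            (show t < (n+1)*r by rw [mul_comm]; exact ht)
          exact Nat.lt_succ_iff.mp hh
        have hYt : fireSet G 1 X0 W t ⊆ fireSet G r X1 W' (t/r) := by
          have h' := ihn (t/r) htn (t%r) (Nat.mod_lt _ hrpos).le
          rwa [hdm t] at h'
        rw [hWt t, Set.disjoint_left]
        intro v hv hv'
        have hv'' : v ∈ W' (t/r + 1) := by
          rw [hP2 (t/r)]
          simp only [Set.mem_iUnion]
          exact ⟨t%r, Finset.mem_range.mpr (Nat.mod_lt _ hrpos), hv'⟩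
        exact Set.disjoint_left.mp (hW'd (t/r)) (hYt hv) hv''
      intro v hv
      have hv' : v ∈ fireSet G 1 X0 W ((r*n+k) + r) := by
        rwa [show r*(n+1)+k = (r*n+k)+r by ring] at hv
      obtain ⟨u, hu, p, hlen, hsupfire⟩ := exists_walk_of_mem_fireSet_one hv'
      have hu' : u ∈ fireSet G r X1 W' n := ihn n le_rfl k hk hu
      refine mem_fireSet_succ.mpr ⟨u, hu', p, hlen, ?_⟩
      intro w hw i hi1 hi2
      obtain ⟨t, ht, hwt⟩ := hsupfire w hw
      intro hwmem
      obtain ⟨i', rfl⟩ : ∃ i', i = i'+1 := ⟨i-1, by omega⟩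
      rw [hP2 i'] at hwmem
      simp only [Set.mem_iUnion] at hwmem
      obtain ⟨q, hqr, hwq⟩ := hwmem
      rw [Finset.mem_range] at hqr
      have hj : w ∈ W (r*i' + q + 1) := by rw [hWm i' q hqr]; exact hwq
      have hjle : r*i' + q + 1 ≤ r*(n+1) := by
        have h1 : r*i' + r = r*(i'+1) := by ring
        have h3 : r*(i'+1) ≤ r*(n+1) := Nat.mul_le_mul_left r (by omega)
        omega
      rcases le_or_gt (r*i'+q+1) t with hc | hc
      · exact not_mem_W_of_le hwt (by omega) hc hj
      · have hwj : w ∈ fireSet G 1 X0 W (r*i'+q) :=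
          fireSet_mono (by omega) (fun t' ht' => hD t' (by omega)) hwt
        exact Set.disjoint_left.mp (hD (r*i'+q) (by omega)) hwj hj
  have hYsub : ∀ t, fireSet G 1 X0 W t ⊆ fireSet G r X1 W' (t/r) := by
    intro t
    have h' := inv (t/r) (t/r) le_rfl (t%r) (Nat.mod_lt _ hrpos).le
    rwa [hdm t] at h'
  have hDall : ∀ t, Disjoint (fireSet G 1 X0 W t) (W (t+1)) := by
    intro t
    rw [hWt t, Set.disjoint_left]
    intro v hv hv'
    have hv'' : v ∈ W' (t/r + 1) := by
      rw [hP2 (t/r)]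
      simp only [Set.mem_iUnion]
      exact ⟨t%r, Finset.mem_range.mpr (Nat.mod_lt _ hrpos), hv'⟩
    exact Set.disjoint_left.mp (hW'd (t/r)) (hYsub t hv) hv''
  have hsz : ∀ m, 1 ≤ m → (W m).Finite ∧ (W m).ncard ≤ f m := by
    intro m hm
    obtain ⟨t, rfl⟩ : ∃ t, m = t+1 := ⟨m-1, by omega⟩
    rw [hWt t]
    have h' := hP1 (t/r) (t%r)
    rwa [hdm t] at h'
  have hfinX' : (fireSet G r X1 W' N).Finite := fireSet_finite hlf hX1 N
  have hsubS : ∀ t, fireSet G 1 X0 W t ⊆ fireSet G r X1 W' N := by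
    intro t
    refine (hYsub t).trans ?_
    rcases le_or_gt (t/r) N with h | h
    · exact fireSet_mono h (fun s _ => hW'd s)
    · rw [hNs (t/r) h.le]
  obtain ⟨M, hMpos, hMs⟩ := stabilize hfinX' hsubS (fun t => fireSet_subset_succ (hDall t))
  exact ⟨W, hsz, hDall, M, hMpos, hMs⟩

end Aux

/-- for a non-decreasing sequence `f` and `g (n+1) = Σ_{i=1}^{r} f (r*n + i)`, the
graph `G` has the `({f_n}, 1)`-containment property iff it has the `({g_n}, r)`-containment
property. -/
theorem stmt7 {V : Type*} (G : SimpleGraph V) (hlf : LocallyFiniteGraph G)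
    (f : ℕ → ℕ) (hf : Monotone f) (r : ℕ) (hr : 1 ≤ r) (g : ℕ → ℕ)
    (hg : ∀ n : ℕ, g (n + 1) = ∑ i ∈ Finset.range r, f (r * n + i + 1)) :
    HasContainmentProperty G 1 f ↔ HasContainmentProperty G r g :=
  ⟨fun h1 => dir1 hlf hr hg h1, fun h2 => dir2 hlf hr hg h2⟩

end Firefighter
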